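/- Let g₀ and g₂ be independent exponentially distributed random variables with rate parameters λ₀ > 0 and λ₂ > 0, and fix P > 0, σ₀² > 0 and R > 0. Then the outage probability Q ↦ ℙ( log₂(1 + g₀P/(g₂Q + σ₀²)) < R ) is strictly increasing in the jamming power Q on (0, ∞). -/

import Mathlib

open MeasureTheory ProbabilityTheory Real

lemma expMeasure_apply' (r : ℝ) {s : Set ℝ} (hs : MeasurableSet s) :
    expMeasure r s = ∫⁻ x in s, exponentialPDF r x := by
  rw [expMeasure, gammaMeasure, withDensity_apply _ hs]
  rfl

lemma expMeasure_Iio_zero' (r : ℝ) : expMeasure r (Set.Iio 0) = 0 := by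
  rw [expMeasure_apply' r measurableSet_Iio]
  exact lintegral_exponentialPDF_of_nonpos le_rfl

lemma expMeasure_Iic' {r : ℝ} (hr : 0 < r) {x : ℝ} (hx : 0 ≤ x) :
    expMeasure r (Set.Iic x) = ENNReal.ofReal (1 - rexp (-(r * x))) := by
  rw [expMeasure_apply' r measurableSet_Iic, lintegral_exponentialPDF_eq_antiDeriv hr, if_pos hx]

lemma expMeasure_Ioc_pos' {r : ℝ} (hr : 0 < r) {a b : ℝ} (ha : 0 ≤ a) (hab : a < b) :
    0 < expMeasure r (Set.Ioc a b) := by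
  have : IsProbabilityMeasure (expMeasure r) := isProbabilityMeasure_expMeasure hr
  have h1 : Set.Ioc a b = Set.Iic b \ Set.Iic a := by
    ext x; simp [Set.mem_Ioc, and_comm]
  rw [h1, measure_diff (Set.Iic_subset_Iic.mpr hab.le)
      measurableSet_Iic.nullMeasurableSet (measure_ne_top _ _),
    expMeasure_Iic' hr (ha.trans hab.le), expMeasure_Iic' hr ha]
  have hexp : rexp (-(r * b)) < rexp (-(r * a)) := by
    apply Real.exp_lt_exp.mpr; nlinarith
  have h2 : (0:ℝ) ≤ 1 - rexp (-(r * a)) := by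
    have : rexp (-(r * a)) ≤ 1 := Real.exp_le_one_iff.mpr (by nlinarith)
    linarith
  rw [← ENNReal.ofReal_sub _ h2]
  apply ENNReal.ofReal_pos.mpr
  linarith

/-- The outage probability `ℙ(log₂(1 + g₀ P / (g₂ Q + σ₀²)) < R)` is strictly increasing in
the jamming power `Q` on `(0, ∞)`. -/
theorem stmt_7 {Ω : Type*} [MeasurableSpace Ω] (μ : Measure Ω) [IsProbabilityMeasure μ]
    (g₀ g₂ : Ω → ℝ) (hg₀ : Measurable g₀) (hg₂ : Measurable g₂)
    (hIndep : IndepFun g₀ g₂ μ)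
    (lam₀ lam₂ : ℝ) (hlam₀ : 0 < lam₀) (hlam₂ : 0 < lam₂)
    (h₀ : Measure.map g₀ μ = expMeasure lam₀)
    (h₂ : Measure.map g₂ μ = expMeasure lam₂)
    (P σ₀sq R : ℝ) (hP : 0 < P) (hσ : 0 < σ₀sq) (hR : 0 < R) :
    StrictMonoOn
      (fun Q => (μ {ω | Real.logb 2 (1 + g₀ ω * P / (g₂ ω * Q + σ₀sq)) < R}).toReal)
      (Set.Ioi (0 : ℝ)) := by
  have h2R : (1:ℝ) < (2:ℝ) ^ R :=
    (Real.one_lt_rpow_iff_of_pos (by norm_num)).mpr (Or.inl ⟨by norm_num, hR⟩)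
  set c : ℝ := (2:ℝ) ^ R - 1 with hc
  have hcpos : 0 < c := by simp only [hc]; linarith
  -- the null set where the gains are negative
  have hN₀ : μ {ω | g₀ ω < 0} = 0 := by
    have h : {ω | g₀ ω < 0} = g₀ ⁻¹' (Set.Iio 0) := rfl
    rw [h, ← Measure.map_apply hg₀ measurableSet_Iio, h₀, expMeasure_Iio_zero']
  have hN₂ : μ {ω | g₂ ω < 0} = 0 := by
    have h : {ω | g₂ ω < 0} = g₂ ⁻¹' (Set.Iio 0) := rfl
    rw [h, ← Measure.map_apply hg₂ measurableSet_Iio, h₂, expMeasure_Iio_zero']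
  set N : Set Ω := {ω | g₀ ω < 0} ∪ {ω | g₂ ω < 0} with hNdef
  have hN : μ N = 0 := measure_union_null hN₀ hN₂
  -- measurability of the simplified events
  have hT : ∀ Q : ℝ, MeasurableSet {ω | g₀ ω * P < c * (g₂ ω * Q + σ₀sq)} := fun Q =>
    measurableSet_lt (hg₀.mul_const P) (((hg₂.mul_const Q).add_const σ₀sq).const_mul c)
  -- the outage event coincides a.e. with the simplified event
  have hST : ∀ Q : ℝ, 0 < Q →
      μ {ω | Real.logb 2 (1 + g₀ ω * P / (g₂ ω * Q + σ₀sq)) < R}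
        = μ {ω | g₀ ω * P < c * (g₂ ω * Q + σ₀sq)} := by
    intro Q hQ
    apply measure_congr
    rw [Filter.eventuallyEq_set]
    have hcompl : ∀ᵐ ω ∂μ, ω ∉ N := by
      rw [← compl_mem_ae_iff] at hN
      exact hN
    filter_upwards [hcompl] with ω hω
    simp only [hNdef, Set.mem_union, Set.mem_setOf_eq, not_or, not_lt] at hω
    obtain ⟨h0, h2⟩ := hω
    have hd : 0 < g₂ ω * Q + σ₀sq := by nlinarith
    have ht : 0 ≤ g₀ ω * P / (g₂ ω * Q + σ₀sq) := by positivity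
    show Real.logb 2 (1 + g₀ ω * P / (g₂ ω * Q + σ₀sq)) < R ↔ _
    rw [Real.logb_lt_iff_lt_rpow (by norm_num) (by linarith)]
    constructor
    · intro h
      have h' : g₀ ω * P / (g₂ ω * Q + σ₀sq) < c := by rw [hc]; linarith
      have := (div_lt_iff₀ hd).mp h'
      exact this
    · intro h
      have h' : g₀ ω * P < c * (g₂ ω * Q + σ₀sq) := h
      have := (div_lt_iff₀ hd).mpr h'
      rw [hc] at this
      linarith
  intro Q₁ hQ₁ Q₂ hQ₂ h12
  simp only [Set.mem_Ioi] at hQ₁ hQ₂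
  simp only
  rw [ENNReal.toReal_lt_toReal (measure_ne_top μ _) (measure_ne_top μ _),
    hST Q₁ hQ₁, hST Q₂ hQ₂]
  -- the rectangle witnessing strictness
  set y₂ : ℝ := (1 + Q₂ / Q₁) / 2 with hy₂def
  have hy₂1 : 1 < y₂ := by
    have : 1 < Q₂ / Q₁ := (one_lt_div hQ₁).mpr h12
    simp only [hy₂def]; linarith
  have hy₂Q : y₂ * Q₁ < Q₂ := by
    have : y₂ * Q₁ = (Q₁ + Q₂) / 2 := by
      rw [hy₂def, div_mul_eq_mul_div, add_mul, div_mul_cancel₀ _ hQ₁.ne', one_mul]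
    rw [this]; linarith
  set x₁ : ℝ := c * (y₂ * Q₁ + σ₀sq) / P with hx₁def
  set x₂ : ℝ := c * (Q₂ + σ₀sq) / P with hx₂def
  have hx₁0 : 0 ≤ x₁ := by
    have hy : 0 < y₂ := by linarith
    positivity
  have hx₁₂ : x₁ < x₂ := by
    rw [hx₁def, hx₂def, div_lt_div_iff_of_pos_right hP]
    nlinarith
  set Rect : Set Ω := g₀ ⁻¹' (Set.Ioc x₁ x₂) ∩ g₂ ⁻¹' (Set.Ioc 1 y₂) with hRect
  have hRectMeas : MeasurableSet Rect := (hg₀ measurableSet_Ioc).inter (hg₂ measurableSet_Ioc)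
  have hRectPos : 0 < μ Rect := by
    rw [hRect, hIndep.measure_inter_preimage_eq_mul _ _ measurableSet_Ioc measurableSet_Ioc,
      ← Measure.map_apply hg₀ measurableSet_Ioc, ← Measure.map_apply hg₂ measurableSet_Ioc,
      h₀, h₂]
    exact ENNReal.mul_pos (expMeasure_Ioc_pos' hlam₀ hx₁0 hx₁₂).ne'
      (expMeasure_Ioc_pos' hlam₂ zero_le_one hy₂1).ne'
  have hRectT₂ : Rect ⊆ {ω | g₀ ω * P < c * (g₂ ω * Q₂ + σ₀sq)} := by
    rintro ω ⟨⟨hg1, hg2⟩, ⟨hh1, hh2⟩⟩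
    simp only [Set.mem_setOf_eq]
    have h1 : g₀ ω * P ≤ c * (Q₂ + σ₀sq) := by
      calc g₀ ω * P ≤ x₂ * P := by nlinarith
      _ = c * (Q₂ + σ₀sq) := by rw [hx₂def]; field_simp
    nlinarith [mul_pos (mul_pos hcpos hQ₂) (sub_pos.mpr hh1)]
  have hRectT₁ : Disjoint Rect {ω | g₀ ω * P < c * (g₂ ω * Q₁ + σ₀sq)} := by
    rw [Set.disjoint_left]
    rintro ω ⟨⟨hg1, hg2⟩, ⟨hh1, hh2⟩⟩ hmem
    simp only [Set.mem_setOf_eq] at hmem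
    have h1 : c * (y₂ * Q₁ + σ₀sq) < g₀ ω * P := by
      calc c * (y₂ * Q₁ + σ₀sq) = x₁ * P := by rw [hx₁def]; field_simp
      _ < g₀ ω * P := by nlinarith
    nlinarith [mul_nonneg (mul_pos hcpos hQ₁).le (sub_nonneg.mpr hh2)]
  have hsub : ({ω | g₀ ω * P < c * (g₂ ω * Q₁ + σ₀sq)} \ N) ∪ Rect
      ⊆ {ω | g₀ ω * P < c * (g₂ ω * Q₂ + σ₀sq)} := by
    rintro ω (⟨hmem, hωN⟩ | hmem)
    · simp only [hNdef, Set.mem_union, Set.mem_setOf_eq, not_or, not_lt] at hωN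
      simp only [Set.mem_setOf_eq] at hmem ⊢
      nlinarith [mul_nonneg (mul_nonneg hcpos.le hωN.2) (sub_nonneg.mpr h12.le)]
    · exact hRectT₂ hmem
  calc μ {ω | g₀ ω * P < c * (g₂ ω * Q₁ + σ₀sq)}
      = μ ({ω | g₀ ω * P < c * (g₂ ω * Q₁ + σ₀sq)} \ N) := (measure_diff_null hN).symm
    _ < μ ({ω | g₀ ω * P < c * (g₂ ω * Q₁ + σ₀sq)} \ N) + μ Rect :=
        ENNReal.lt_add_right (measure_ne_top μ _) hRectPos.ne'
    _ = μ (({ω | g₀ ω * P < c * (g₂ ω * Q₁ + σ₀sq)} \ N) ∪ Rect) :=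
        (measure_union (hRectT₁.symm.mono_left Set.diff_subset) hRectMeas).symm
    _ ≤ μ {ω | g₀ ω * P < c * (g₂ ω * Q₂ + σ₀sq)} := measure_mono hsub
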